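/- Let A0 > 0 and B0 ≥ 0 be real numbers, let I be a nonempty finite index set of candidate splits, and for each i ∈ I let ΔE_i > 0 and ΔL_i be real numbers. Let M be a real number such that B0 + M > 0 and B0 + ΔL_i + M > 0 for all i. Then there exists i ∈ I with A0/(B0 + M) < (A0 + ΔE_i)/(B0 + ΔL_i + M) if and only if M > A0·min_{i∈I}(ΔL_i/ΔE_i) − B0. Consequently, the smallest stabilizer admitting a valid split is determined by the split minimizing ΔL_i/ΔE_i, and STAIR can compute the optimal M and the best split in one step. -/
import Mathlib


/-- There exists a valid split at stabilizer `M` iff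
`M > A0 * min_i (ΔL_i / ΔE_i) - B0`: the smallest stabilizer admitting a
valid split is determined by the split minimizing `ΔL_i / ΔE_i`. -/
theorem stair_optimal_M {ι : Type*} (I : Finset ι) (hI : I.Nonempty)
    (A0 B0 : ℝ) (hA0 : 0 < A0) (hB0 : 0 ≤ B0)
    (ΔE ΔL : ι → ℝ) (hΔE : ∀ i ∈ I, 0 < ΔE i)
    (M : ℝ) (h1 : 0 < B0 + M) (h2 : ∀ i ∈ I, 0 < B0 + ΔL i + M) :
    (∃ i ∈ I, A0 / (B0 + M) < (A0 + ΔE i) / (B0 + ΔL i + M)) ↔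
      M > A0 * I.inf' hI (fun i => ΔL i / ΔE i) - B0 := by
  have key : ∀ i ∈ I,
      (A0 / (B0 + M) < (A0 + ΔE i) / (B0 + ΔL i + M) ↔
        ΔL i / ΔE i < (M + B0) / A0) := by
    intro i hi
    rw [div_lt_div_iff₀ h1 (h2 i hi), div_lt_div_iff₀ (hΔE i hi) hA0]
    constructor <;> intro h <;> nlinarith [hΔE i hi, h2 i hi]
  have hrhs : (M > A0 * I.inf' hI (fun i => ΔL i / ΔE i) - B0) ↔
      I.inf' hI (fun i => ΔL i / ΔE i) < (M + B0) / A0 := by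
    rw [lt_div_iff₀ hA0]
    constructor <;> intro h <;> nlinarith
  rw [hrhs, Finset.inf'_lt_iff]
  constructor
  · rintro ⟨i, hi, h⟩; exact ⟨i, hi, (key i hi).mp h⟩
  · rintro ⟨i, hi, h⟩; exact ⟨i, hi, (key i hi).mpr h⟩
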